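/- For n ≥ 3, the number of functions c : ZMod n → {Empty, Blue, Red} such that for all i, {c(i), c(i+1)} ≠ {Blue, Red} (no two cyclically adjacent vertices have different non-Empty colors) equals (1+√2)^n + (1-√2)^n + 1, as an identity of real numbers. -/

import Mathlib

inductive Color : Type
  | Empty | Blue | Red
  deriving DecidableEq

instance : Fintype Color :=
  ⟨{Color.Empty, Color.Blue, Color.Red}, fun x => by cases x <;> simp⟩

lemma color_univ : (Finset.univ : Finset Color) = {.Empty, .Blue, .Red} := by decide

lemma sum_color (g : Color → ℕ) : ∑ c : Color, g c = g .Empty + g .Blue + g .Red := by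
  rw [color_univ]
  rw [Finset.sum_insert (by decide), Finset.sum_insert (by decide), Finset.sum_singleton, Nat.add_assoc]

def Compat (a b : Color) : Prop :=
  ¬((a = Color.Blue ∧ b = Color.Red) ∨ (a = Color.Red ∧ b = Color.Blue))

instance (a b : Color) : Decidable (Compat a b) := by unfold Compat; infer_instance

def W (a b : Color) : ℕ := if Compat a b then 1 else 0

def P : ℕ → Color → Color → ℕ
  | 0, a, b => if a = b then 1 else 0
  | n+1, a, b => ∑ c : Color, P n a c * W c b

def t (n : ℕ) : ℕ := ∑ a : Color, P n a a

lemma trec (n : ℕ) : t (n+3) + t (n+1) + t n = 3 * t (n+2) := by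
  simp only [t, show n+3 = (n+2)+1 from rfl, show n+2 = (n+1)+1 from rfl, P, sum_color, W]
  simp [Compat]
  ring

noncomputable def g (n : ℕ) : ℝ := (1 + Real.sqrt 2) ^ n + (1 - Real.sqrt 2) ^ n + 1

lemma sqrt2_sq : Real.sqrt 2 ^ 2 = 2 := Real.sq_sqrt (by norm_num)

lemma t_real : ∀ n : ℕ, (t n : ℝ) = g n := by
  intro n
  induction n using Nat.strong_induction_on with
  | _ n ih =>
    match n, ih with
    | 0, _ => norm_num [g, show t 0 = 3 by decide]
    | 1, _ => rw [show t 1 = 3 by decide]; unfold g; push_cast; ring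
    | 2, _ =>
      rw [show t 2 = 7 by decide]; unfold g
      have h := sqrt2_sq
      push_cast; linear_combination (-2 : ℝ) * h
    | (k+3), ih =>
      have h1 := trec k
      have h2 : (t (k+3) : ℝ) = 3 * t (k+2) - t (k+1) - t k := by
        have := congrArg (Nat.cast : ℕ → ℝ) h1
        push_cast at this
        linarith
      rw [h2, ih (k+2) (by omega), ih (k+1) (by omega), ih k (by omega)]
      unfold g
      have h := sqrt2_sq
      have e1 : ∀ j : ℕ, (1 + Real.sqrt 2) ^ (k + j) = (1+Real.sqrt 2)^k * (1+Real.sqrt 2)^j :=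
        fun j => pow_add _ _ _
      have e2 : ∀ j : ℕ, (1 - Real.sqrt 2) ^ (k + j) = (1-Real.sqrt 2)^k * (1-Real.sqrt 2)^j :=
        fun j => pow_add _ _ _
      rw [e1 3, e1 2, e1 1, e2 3, e2 2, e2 1]
      linear_combination ((1-Real.sqrt 2)^k - (1+Real.sqrt 2)^k) * Real.sqrt 2 * h

abbrev PathT (n : ℕ) (a b : Color) : Type :=
  {f : Fin (n+1) → Color // f 0 = a ∧ f (Fin.last n) = b ∧
    ∀ i : Fin n, Compat (f i.castSucc) (f i.succ)}

abbrev StepT (n : ℕ) (a b c : Color) : Type :=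
  {f : Fin (n+1) → Color // (f 0 = a ∧ f (Fin.last n) = c ∧
    ∀ i : Fin n, Compat (f i.castSucc) (f i.succ)) ∧ Compat c b}

lemma card_step (n : ℕ) (a b c : Color)
    (IH : Fintype.card (PathT n a c) = P n a c) :
    Fintype.card (StepT n a b c) = P n a c * W c b := by
  by_cases h : Compat c b
  · rw [W, if_pos h, mul_one, ← IH]
    exact Fintype.card_congr (Equiv.subtypeEquivRight (fun f => by tauto))
  · rw [W, if_neg h, mul_zero]
    exact Fintype.card_eq_zero_iff.mpr ⟨fun ⟨f, hf⟩ => h hf.2⟩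

def fwdP (n : ℕ) (a b : Color) : PathT (n+1) a b → Σ c : Color, StepT n a b c :=
  fun ⟨f, h0, hl, hc⟩ =>
    ⟨f ((Fin.last n).castSucc), ⟨Fin.init f,
      ⟨⟨by simpa [Fin.init] using h0,
       rfl,
       fun i => by
         have := hc i.castSucc
         simpa only [Fin.init, Fin.succ_castSucc] using this⟩,
      by
        have := hc (Fin.last n)
        rwa [Fin.succ_last, hl] at this⟩⟩⟩

def bwdP (n : ℕ) (a b : Color) : (Σ c : Color, StepT n a b c) → PathT (n+1) a b :=
  fun ⟨c, ⟨g, ⟨h0, hl, hc⟩, hcb⟩⟩ =>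
    ⟨Fin.snoc g b,
     by rw [show (0 : Fin (n+2)) = Fin.castSucc 0 by rfl, Fin.snoc_castSucc]; exact h0,
     Fin.snoc_last _ _,
     fun i => by
       refine Fin.lastCases ?_ ?_ i
       · rw [Fin.succ_last, Fin.snoc_last, Fin.snoc_castSucc, hl]
         exact hcb
       · intro j
         rw [Fin.succ_castSucc, Fin.snoc_castSucc, Fin.snoc_castSucc]
         exact hc j⟩

lemma fwdP_inj (n : ℕ) (a b : Color) : Function.Injective (fwdP n a b) := by
  rintro ⟨f1, h01, hl1, hc1⟩ ⟨f2, h02, hl2, hc2⟩ heq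
  apply Subtype.ext
  have hinit : Fin.init f1 = Fin.init f2 :=
    congrArg (fun x : Σ c : Color, StepT n a b c => (x.2 : Fin (n+1) → Color)) heq
  have h2 : Fin.snoc (Fin.init f1) (f1 (Fin.last (n+1))) =
         Fin.snoc (Fin.init f2) (f2 (Fin.last (n+1))) := by
    rw [hinit, hl1, hl2]
  rwa [Fin.snoc_init_self, Fin.snoc_init_self] at h2

lemma bwdP_inj (n : ℕ) (a b : Color) : Function.Injective (bwdP n a b) := by
  rintro ⟨c1, ⟨g1, ⟨h01, hl1, hc1'⟩, hcb1⟩⟩ ⟨c2, ⟨g2, ⟨h02, hl2, hc2'⟩, hcb2⟩⟩ heq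
  have hsn : Fin.snoc g1 b = (Fin.snoc g2 b : Fin (n+2) → Color) :=
    congrArg Subtype.val heq
  have hg : g1 = g2 := by
    have h3 := congrArg Fin.init hsn
    rwa [Fin.init_snoc, Fin.init_snoc] at h3
  have hcc : c1 = c2 := by rw [← hl1, ← hl2, hg]
  subst hcc; subst hg
  rfl

lemma card_path (n : ℕ) (a b : Color) : Fintype.card (PathT n a b) = P n a b := by
  induction n generalizing b with
  | zero =>
    by_cases h : a = b
    · subst h
      rw [show P 0 a a = 1 by simp [P]]
      refine Fintype.card_eq_one_iff.mpr ⟨⟨fun _ => a, rfl, rfl, fun i => i.elim0⟩, ?_⟩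
      rintro ⟨f, h0, hl, -⟩
      apply Subtype.ext
      funext i
      have hi : i = 0 := by omega
      subst hi
      exact h0
    · rw [show P 0 a b = 0 by simp [P, h]]
      refine Fintype.card_eq_zero_iff.mpr ⟨fun x => h ?_⟩
      obtain ⟨f, h0, hl, -⟩ := x
      have e : Fin.last 0 = 0 := by omega
      rw [e] at hl
      rw [← h0, ← hl]
  | succ n IH =>
    have key : Fintype.card (PathT (n+1) a b) = Fintype.card (Σ c : Color, StepT n a b c) :=
      Nat.le_antisymm (Fintype.card_le_of_injective _ (fwdP_inj n a b))
        (Fintype.card_le_of_injective _ (bwdP_inj n a b))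
    rw [key, Fintype.card_sigma, show P (n+1) a b = ∑ c : Color, P n a c * W c b from rfl]
    exact Finset.sum_congr rfl fun c _ => card_step n a b c (IH c)

section Cyc
variable (n : ℕ) [NeZero n]

abbrev CycT : Type :=
  {c : ZMod n → Color // ∀ i : ZMod n, Compat (c i) (c (i + 1))}

lemma bndC (j : ZMod n) : j.val < n + 1 := lt_trans (ZMod.val_lt j) (Nat.lt_succ_self n)

def fwdC : CycT n → Σ a : Color, PathT n a a :=
  fun ⟨c, hc⟩ =>
    ⟨c 0, ⟨fun i => c (i.val : ZMod n),
      by simp,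
      by simp,
      fun i => by
        have h1 : ((i.succ.val : ℕ) : ZMod n) = ((i.castSucc.val : ℕ) : ZMod n) + 1 := by
          simp only [Fin.val_succ, Fin.coe_castSucc]
          push_cast
          ring
        show Compat (c (i.castSucc.val : ZMod n)) (c (i.succ.val : ZMod n))
        rw [h1]
        exact hc _⟩⟩

def bwdC (hn : 1 < n) : (Σ a : Color, PathT n a a) → CycT n :=
  fun ⟨a, ⟨f, h0, hl, hf⟩⟩ =>
    ⟨fun j => f ⟨j.val, bndC n j⟩,
     fun i => by
       have hvlt : i.val < n := ZMod.val_lt i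
       show Compat (f ⟨i.val, bndC n i⟩) (f ⟨(i+1).val, bndC n (i+1)⟩)
       have hL : f ⟨i.val, bndC n i⟩ = f ((⟨i.val, hvlt⟩ : Fin n).castSucc) := by
         congr 1
       have hval : (i+1).val = (i.val + 1) % n := by
         rw [ZMod.val_add, ZMod.val_one_eq_one_mod, Nat.mod_eq_of_lt hn]
       have hkey : f ⟨(i+1).val, bndC n (i+1)⟩ = f ((⟨i.val, hvlt⟩ : Fin n).succ) := by
         by_cases hv : i.val + 1 < n
         · congr 1
           apply Fin.ext
           simp only [Fin.val_succ, hval]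
           exact Nat.mod_eq_of_lt hv
         · have hv2 : i.val + 1 = n := by omega
           have h1 : (i+1).val = 0 := by rw [hval, hv2, Nat.mod_self]
           have h2 : (⟨i.val, hvlt⟩ : Fin n).succ = Fin.last n := by
             apply Fin.ext; simp [Fin.val_succ, hv2]
           rw [h2, hl, ← h0]
           congr 1
           apply Fin.ext
           simp [h1]
       rw [hL, hkey]
       exact hf _⟩

lemma fwdC_inj : Function.Injective (fwdC n) := by
  rintro ⟨c1, hc1⟩ ⟨c2, hc2⟩ heq
  have h : ∀ j : ZMod n, c1 j = c2 j := by
    intro j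
    have h2 : c1 ((j.val : ℕ) : ZMod n) = c2 ((j.val : ℕ) : ZMod n) :=
      congrArg (fun x : Σ a : Color, PathT n a a =>
        (x.2 : Fin (n+1) → Color) ⟨j.val, bndC n j⟩) heq
    rwa [show ((j.val : ℕ) : ZMod n) = j from ZMod.natCast_rightInverse j] at h2
  exact Subtype.ext (funext h)

lemma bwdC_inj (hn : 1 < n) : Function.Injective (bwdC n hn) := by
  rintro ⟨a1, ⟨f1, h01, hl1, hf1⟩⟩ ⟨a2, ⟨f2, h02, hl2, hf2⟩⟩ heq
  have h : ∀ j : ZMod n, f1 ⟨j.val, bndC n j⟩ = f2 ⟨j.val, bndC n j⟩ :=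
    fun j => congrArg (fun x : CycT n => (x : ZMod n → Color) j) heq
  have hfin : ∀ i : Fin (n+1), f1 i = f2 i := by
    intro i
    by_cases hi : i.val < n
    · have := h (i.val : ZMod n)
      rwa [show (⟨((i.val : ZMod n)).val, bndC n _⟩ : Fin (n+1)) = i from
        Fin.ext (by simp [ZMod.val_natCast, Nat.mod_eq_of_lt hi])] at this
    · have hi2 : i = Fin.last n := Fin.ext (by simp [Fin.val_last]; omega)
      have h00 := h 0
      rw [show (⟨(0 : ZMod n).val, bndC n _⟩ : Fin (n+1)) = 0 from
        Fin.ext (by simp)] at h00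
      rw [hi2, hl1, hl2, ← h01, ← h02]
      exact h00
  have hff : f1 = f2 := funext hfin
  have ha : a1 = a2 := by rw [← h01, ← h02, hff]
  subst ha; subst hff
  rfl

lemma card_cyc (hn : 1 < n) : Fintype.card (CycT n) = t n := by
  have key : Fintype.card (CycT n) = Fintype.card (Σ a : Color, PathT n a a) :=
    Nat.le_antisymm (Fintype.card_le_of_injective _ (fwdC_inj n))
      (Fintype.card_le_of_injective _ (bwdC_inj n hn))
  rw [key, Fintype.card_sigma, t]
  exact Finset.sum_congr rfl fun a _ => card_path n a a

end Cyc

theorem snortCycle_count (n : ℕ) (hn : 3 ≤ n) :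
    (Nat.card {c : ZMod n → Color //
        ∀ i : ZMod n,
          ¬((c i = Color.Blue ∧ c (i + 1) = Color.Red) ∨
            (c i = Color.Red ∧ c (i + 1) = Color.Blue))} : ℝ) =
      (1 + Real.sqrt 2) ^ n + (1 - Real.sqrt 2) ^ n + 1 := by
  haveI : NeZero n := ⟨by omega⟩
  have h1 : Nat.card {c : ZMod n → Color //
        ∀ i : ZMod n,
          ¬((c i = Color.Blue ∧ c (i + 1) = Color.Red) ∨
            (c i = Color.Red ∧ c (i + 1) = Color.Blue))} = t n := by
    rw [Nat.card_eq_fintype_card]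
    rw [show (Fintype.card {c : ZMod n → Color //
        ∀ i : ZMod n,
          ¬((c i = Color.Blue ∧ c (i + 1) = Color.Red) ∨
            (c i = Color.Red ∧ c (i + 1) = Color.Blue))}) =
      Fintype.card (CycT n) from
      Fintype.card_congr (Equiv.subtypeEquivRight fun c => by rfl)]
    exact card_cyc n (by omega)
  rw [h1]
  exact t_real n
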